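/- Let F be a field of characteristic 0, R = F[h, c] the polynomial algebra in two commuting variables, and φ the F-algebra automorphism of R determined by φ(h) = h − 1 and φ(c) = c. Then the φ-fixed subalgebra {r ∈ R : φ(r) = r} equals F[c] (the subalgebra of polynomials in c alone), and every ideal J of R with φ(J) ⊆ J is generated, as an ideal of R, by J ∩ F[c]. -/

import Mathlib

open Polynomial

private lemma taylor_coeff_top {A : Type*} [CommRing A] (p : A[X]) :
    (taylor (-1 : A) p).coeff p.natDegree = p.coeff p.natDegree := by
  rw [taylor_coeff]
  have h1 : ((hasseDeriv p.natDegree) p).natDegree ≤ 0 :=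
    (natDegree_hasseDeriv_le p p.natDegree).trans (by omega)
  rw [eq_C_of_natDegree_le_zero h1, eval_C, hasseDeriv_coeff]
  simp

private lemma taylor_coeff_sub_one {A : Type*} [CommRing A] {p : A[X]}
    (hn : 1 ≤ p.natDegree) :
    (taylor (-1 : A) p).coeff (p.natDegree - 1)
      = p.coeff (p.natDegree - 1) - (p.natDegree : A) * p.coeff p.natDegree := by
  rw [taylor_coeff]
  have h1 : ((hasseDeriv (p.natDegree - 1)) p).natDegree ≤ 1 :=
    (natDegree_hasseDeriv_le p (p.natDegree - 1)).trans (by omega)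
  rw [eq_X_add_C_of_natDegree_le_one h1]
  simp only [eval_add, eval_mul, eval_C, eval_X]
  rw [hasseDeriv_coeff, hasseDeriv_coeff]
  have e1 : 1 + (p.natDegree - 1) = p.natDegree := by omega
  have e2 : 0 + (p.natDegree - 1) = p.natDegree - 1 := by omega
  rw [e1, e2]
  have e3 : p.natDegree.choose (p.natDegree - 1) = p.natDegree := by
    rw [Nat.choose_symm hn, Nat.choose_one_right]
  have e4 : (p.natDegree - 1).choose (p.natDegree - 1) = 1 := Nat.choose_self _
  rw [e3, e4]
  push_cast
  ring

private lemma delta_spec {A : Type*} [CommRing A] [IsDomain A]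
    (hu : ∀ n : ℕ, n ≠ 0 → IsUnit ((n : ℕ) : A))
    {p : A[X]} (hp : p ≠ 0) (hn : 1 ≤ p.natDegree) :
    (taylor (-1 : A) p - p).natDegree = p.natDegree - 1 ∧
    (taylor (-1 : A) p - p).leadingCoeff = -(p.natDegree : A) * p.leadingCoeff := by
  set g := taylor (-1 : A) p - p with hg
  have hle : g.natDegree ≤ p.natDegree - 1 := by
    rw [natDegree_le_iff_coeff_eq_zero]
    intro m hm
    rcases eq_or_lt_of_le (show p.natDegree ≤ m by omega) with h | h
    · rw [hg, coeff_sub, ← h, taylor_coeff_top, sub_self]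
    · have h1 : (taylor (-1 : A) p).coeff m = 0 :=
        coeff_eq_zero_of_natDegree_lt (by rw [natDegree_taylor]; exact h)
      have h2 : p.coeff m = 0 := coeff_eq_zero_of_natDegree_lt h
      rw [hg, coeff_sub, h1, h2, sub_zero]
  have hc : g.coeff (p.natDegree - 1) = -(p.natDegree : A) * p.leadingCoeff := by
    rw [hg, coeff_sub, taylor_coeff_sub_one hn, leadingCoeff]
    ring
  have hne : -(p.natDegree : A) * p.leadingCoeff ≠ 0 := by
    have h1 : ((p.natDegree : ℕ) : A) ≠ 0 := (hu _ (by omega)).ne_zero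
    have h2 : p.leadingCoeff ≠ 0 := leadingCoeff_ne_zero.mpr hp
    exact mul_ne_zero (neg_ne_zero.mpr h1) h2
  have hdeg : g.natDegree = p.natDegree - 1 :=
    le_antisymm hle (le_natDegree_of_ne_zero (by rw [hc]; exact hne))
  exact ⟨hdeg, by rw [leadingCoeff, hdeg, hc]⟩

private lemma fixed_is_C {A : Type*} [CommRing A] [IsDomain A]
    (hu : ∀ n : ℕ, n ≠ 0 → IsUnit ((n : ℕ) : A))
    {p : A[X]} (hfix : taylor (-1 : A) p = p) : p = C (p.coeff 0) := by
  by_cases h : p.natDegree = 0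
  · exact eq_C_of_natDegree_le_zero (le_of_eq h)
  · exfalso
    have hn : 1 ≤ p.natDegree := by omega
    have hp : p ≠ 0 := fun h0 => h (by simp [h0])
    have hco := taylor_coeff_sub_one (A := A) (p := p) hn
    rw [hfix] at hco
    have h2 : (p.natDegree : A) * p.coeff p.natDegree = 0 := sub_eq_self.mp hco.symm
    have h1 : ((p.natDegree : ℕ) : A) ≠ 0 := (hu _ (by omega)).ne_zero
    have h3 : p.coeff p.natDegree ≠ 0 := by
      rw [← leadingCoeff]; exact leadingCoeff_ne_zero.mpr hp
    exact (mul_ne_zero h1 h3) h2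

private lemma C_leadingCoeff_mem {A : Type*} [CommRing A] [IsDomain A]
    (hu : ∀ n : ℕ, n ≠ 0 → IsUnit ((n : ℕ) : A))
    (J : Ideal A[X]) (hJ : ∀ f ∈ J, taylor (-1 : A) f ∈ J) :
    ∀ (n : ℕ) (f : A[X]), f ∈ J → f.natDegree = n → C f.leadingCoeff ∈ J := by
  intro n
  induction n using Nat.strong_induction_on with
  | _ n ih =>
    intro f hf hn
    by_cases h0 : f = 0
    · simp [h0]
    by_cases hdeg : f.natDegree = 0
    · have hfC : f = C f.leadingCoeff := by
        rw [leadingCoeff, hdeg]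
        exact eq_C_of_natDegree_le_zero (le_of_eq hdeg)
      rwa [← hfC]
    · have hn1 : 1 ≤ f.natDegree := by omega
      obtain ⟨hd, hl⟩ := delta_spec hu h0 hn1
      have hgJ : taylor (-1 : A) f - f ∈ J := J.sub_mem (hJ f hf) hf
      have hCg : C (taylor (-1 : A) f - f).leadingCoeff ∈ J :=
        ih (f.natDegree - 1) (by omega) _ hgJ hd
      rw [hl] at hCg
      obtain ⟨u, hu'⟩ := ((hu f.natDegree (by omega)).neg).map (C : A →+* A[X])
      have key : (C (-(f.natDegree : A)) : A[X]) * C f.leadingCoeff ∈ J := by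
        rw [← map_mul]; exact hCg
      have hmem := J.mul_mem_left (↑u⁻¹) key
      rwa [← hu', Units.inv_mul_cancel_left] at hmem

private lemma stable_ideal_span {A : Type*} [CommRing A] [IsDomain A]
    (hu : ∀ n : ℕ, n ≠ 0 → IsUnit ((n : ℕ) : A))
    (J : Ideal A[X]) (hJ : ∀ f ∈ J, taylor (-1 : A) f ∈ J) :
    J = Ideal.span ((J : Set A[X]) ∩ Set.range (C : A → A[X])) := by
  apply le_antisymm
  · have main : ∀ (n : ℕ) (f : A[X]), f ∈ J → f.natDegree = n →
        f ∈ Ideal.span ((J : Set A[X]) ∩ Set.range (C : A → A[X])) := by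
      intro n
      induction n using Nat.strong_induction_on with
      | _ n ih =>
        intro f hf hn
        by_cases h0 : f = 0
        · simp [h0]
        by_cases hdeg : f.natDegree = 0
        · exact Ideal.subset_span ⟨hf, f.coeff 0,
            (eq_C_of_natDegree_le_zero (le_of_eq hdeg)).symm⟩
        · have hane : f.leadingCoeff ≠ 0 := leadingCoeff_ne_zero.mpr h0
          have haJ : C f.leadingCoeff ∈ J :=
            C_leadingCoeff_mem hu J hJ f.natDegree f hf rfl
          have haS : C f.leadingCoeff ∈
              Ideal.span ((J : Set A[X]) ∩ Set.range (C : A → A[X])) :=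
            Ideal.subset_span ⟨haJ, f.leadingCoeff, rfl⟩
          have hq : C f.leadingCoeff * X ^ f.natDegree ∈
              Ideal.span ((J : Set A[X]) ∩ Set.range (C : A → A[X])) :=
            Ideal.mul_mem_right _ _ haS
          have hf'J : f - C f.leadingCoeff * X ^ f.natDegree ∈ J :=
            J.sub_mem hf (Ideal.mul_mem_right _ _ haJ)
          by_cases h0' : f - C f.leadingCoeff * X ^ f.natDegree = 0
          · have hfe : f = C f.leadingCoeff * X ^ f.natDegree := by
              rw [← sub_eq_zero]; exact h0'
            rw [hfe]; exact hq
          · have hdd : f.degree = (C f.leadingCoeff * X ^ f.natDegree).degree := by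
              rw [degree_C_mul_X_pow _ hane, degree_eq_natDegree h0]
            have hdsub := degree_sub_lt hdd h0
              (by rw [leadingCoeff_C_mul_X_pow])
            have hlt : (f - C f.leadingCoeff * X ^ f.natDegree).natDegree < f.natDegree :=
              natDegree_lt_natDegree h0' hdsub
            have hmem := ih _ (by omega) _ hf'J rfl
            have hfe : f = (f - C f.leadingCoeff * X ^ f.natDegree) +
                C f.leadingCoeff * X ^ f.natDegree := by ring
            rw [hfe]
            exact Ideal.add_mem _ hmem hq
    intro f hf
    exact main f.natDegree f hf rfl
  · rw [Ideal.span_le]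
    exact Set.inter_subset_left

/-- Let `F` have characteristic `0`, `R = F[h, c]` (with `h = X 0`,
`c = X 1`), and `φ` the `F`-algebra automorphism with `φ(h) = h − 1`, `φ(c) = c`.  Then
the `φ`-fixed subalgebra is `F[c]`, and every `φ`-stable ideal `J` of `R` is generated,
as an ideal of `R`, by `J ∩ F[c]`. -/
theorem stmt_12 {F : Type*} [Field F] [CharZero F]
    (φ : MvPolynomial (Fin 2) F ≃ₐ[F] MvPolynomial (Fin 2) F)
    (hφh : φ (MvPolynomial.X 0) = MvPolynomial.X 0 - 1)
    (hφc : φ (MvPolynomial.X 1) = MvPolynomial.X 1) :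
    ({r : MvPolynomial (Fin 2) F | φ r = r} =
      ↑(Algebra.adjoin F {(MvPolynomial.X 1 : MvPolynomial (Fin 2) F)})) ∧
    (∀ J : Ideal (MvPolynomial (Fin 2) F), (∀ f ∈ J, φ f ∈ J) →
      J = Ideal.span ((J : Set (MvPolynomial (Fin 2) F)) ∩
        ↑(Algebra.adjoin F {(MvPolynomial.X 1 : MvPolynomial (Fin 2) F)}))) := by
  have hu : ∀ n : ℕ, n ≠ 0 → IsUnit ((n : ℕ) : MvPolynomial (Fin 1) F) := by
    intro n hn
    have hcast : ((n : ℕ) : MvPolynomial (Fin 1) F) = MvPolynomial.C ((n : ℕ) : F) :=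
      (map_natCast (MvPolynomial.C : F →+* MvPolynomial (Fin 1) F) n).symm
    rw [hcast]
    exact (isUnit_iff_ne_zero.mpr (Nat.cast_ne_zero.mpr hn)).map
      (MvPolynomial.C : F →+* MvPolynomial (Fin 1) F)
  set e := MvPolynomial.finSuccEquiv F 1 with he
  have hX1 : e (MvPolynomial.X 1) = Polynomial.C (MvPolynomial.X 0) := by
    have h1 : (1 : Fin 2) = Fin.succ 0 := rfl
    rw [h1, MvPolynomial.finSuccEquiv_X_succ]
  set ι : MvPolynomial (Fin 1) F →ₐ[F] MvPolynomial (Fin 2) F :=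
    e.symm.toAlgHom.comp CAlgHom with hι
  have hιdef : ∀ a, ι a = e.symm (Polynomial.C a) := fun a => by
    simp [hι, CAlgHom_apply]
  have hι0 : ι (MvPolynomial.X 0) = MvPolynomial.X 1 := by
    rw [hιdef, ← hX1, e.symm_apply_apply]
  have hrange : ι.range = Algebra.adjoin F {(MvPolynomial.X 1 : MvPolynomial (Fin 2) F)} := by
    have h1 : (⊤ : Subalgebra F (MvPolynomial (Fin 1) F)) =
        Algebra.adjoin F {(MvPolynomial.X 0 : MvPolynomial (Fin 1) F)} := by
      rw [← MvPolynomial.adjoin_range_X]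
      congr 1
      rw [Set.range_unique]
      rfl
    rw [← Algebra.map_top, h1, AlgHom.map_adjoin, Set.image_singleton, hι0]
  have hφι : ∀ a, φ (ι a) = ι a := by
    have hcomp : φ.toAlgHom.comp ι = ι := by
      apply MvPolynomial.algHom_ext
      intro i
      have hi : i = 0 := Subsingleton.elim _ _
      subst hi
      simp [hι0, hφc]
    intro a
    exact DFunLike.congr_fun hcomp a
  have key : ∀ r, e (φ r) = taylor (-1) (e r) := by
    have hXC : (Polynomial.X + Polynomial.C (-1 : MvPolynomial (Fin 1) F)) =
        Polynomial.X - 1 := by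
      simp [sub_eq_add_neg]
    have hcomp : e.toAlgHom.comp φ.toAlgHom =
        ((Polynomial.aeval (Polynomial.X - 1 : Polynomial (MvPolynomial (Fin 1) F))).restrictScalars
          F).comp e.toAlgHom := by
      apply MvPolynomial.algHom_ext
      intro i
      fin_cases i
      · show e (φ (MvPolynomial.X 0)) =
          aeval (Polynomial.X - 1) (e (MvPolynomial.X 0))
        rw [hφh, map_sub, map_one, he, MvPolynomial.finSuccEquiv_X_zero]
        simp
      · show e (φ (MvPolynomial.X 1)) =
          aeval (Polynomial.X - 1) (e (MvPolynomial.X 1))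
        rw [hφc, hX1]
        simp [aeval_C, algebraMap_eq]
    intro r
    have h1 := DFunLike.congr_fun hcomp r
    simp only [AlgHom.coe_comp, Function.comp_apply, AlgEquiv.toAlgHom_eq_coe,
      AlgHom.coe_coe, AlgHom.coe_restrictScalars'] at h1
    rw [show e (φ r) = _ from h1, taylor_apply, hXC, aeval_def, algebraMap_eq]
    rfl
  constructor
  · ext r
    simp only [Set.mem_setOf_eq, SetLike.mem_coe]
    constructor
    · intro hr
      have h1 : taylor (-1) (e r) = e r := by rw [← key, hr]
      have h2 : e r = Polynomial.C ((e r).coeff 0) := fixed_is_C hu h1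
      have h3 : r = ι ((e r).coeff 0) := by
        rw [hιdef, ← h2, e.symm_apply_apply]
      rw [← hrange]
      exact ⟨_, h3.symm⟩
    · intro hr
      rw [← hrange] at hr
      obtain ⟨a, rfl⟩ := hr
      exact hφι a
  · intro J hJst
    set J' : Ideal (Polynomial (MvPolynomial (Fin 1) F)) := Ideal.comap e.symm J with hJ'
    have hmemJ' : ∀ q, q ∈ J' ↔ e.symm q ∈ J := fun q => Ideal.mem_comap
    have hJ'st : ∀ q ∈ J', taylor (-1) q ∈ J' := by
      intro q hq
      rw [hmemJ'] at hq ⊢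
      have h1 : taylor (-1) q = e (φ (e.symm q)) := by
        rw [key, e.apply_symm_apply]
      rw [h1, e.symm_apply_apply]
      exact hJst _ hq
    have hspan := stable_ideal_span hu J' hJ'st
    have hmap : J = Ideal.map e.symm J' := by
      ext x
      rw [Ideal.mem_map_iff_of_surjective _ e.symm.surjective]
      constructor
      · intro hx
        exact ⟨e x, (hmemJ' _).mpr (by rwa [e.symm_apply_apply]), e.symm_apply_apply x⟩
      · rintro ⟨y, hy, rfl⟩
        exact (hmemJ' _).mp hy
    have himage : ⇑e.symm '' ((J' : Set _) ∩ Set.range (Polynomial.C :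
          MvPolynomial (Fin 1) F → Polynomial (MvPolynomial (Fin 1) F))) =
        (J : Set (MvPolynomial (Fin 2) F)) ∩
          ↑(Algebra.adjoin F {(MvPolynomial.X 1 : MvPolynomial (Fin 2) F)}) := by
      rw [Set.image_inter e.symm.injective]
      congr 1
      · have h1 : (J' : Set _) = ⇑e.symm ⁻¹' (J : Set _) := rfl
        rw [h1, Set.image_preimage_eq _ e.symm.surjective]
      · rw [← Set.range_comp]
        have h2 : Set.range (⇑e.symm ∘ Polynomial.C) = Set.range ι := by
          apply Set.range_eq_iff _ _ |>.mpr
          constructor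
          · intro a; exact ⟨a, (hιdef a).symm⟩
          · rintro b ⟨a, rfl⟩; exact ⟨a, (hιdef a).symm⟩
        rw [h2, ← AlgHom.coe_range, hrange]
    calc J = Ideal.map e.symm J' := hmap
      _ = Ideal.map e.symm (Ideal.span ((J' : Set _) ∩ Set.range Polynomial.C)) := by
          rw [← hspan]
      _ = Ideal.span (⇑e.symm '' ((J' : Set _) ∩ Set.range Polynomial.C)) :=
          Ideal.map_span _ _
      _ = Ideal.span ((J : Set (MvPolynomial (Fin 2) F)) ∩
            ↑(Algebra.adjoin F {(MvPolynomial.X 1 : MvPolynomial (Fin 2) F)})) := by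
          rw [himage]
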